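/- Let k be a field, n ≥ 2, A = k[x]/(xⁿ), and 1 ≤ m < n. Let T₂ be the two-term cochain complex of A-modules A --·x^m--> A concentrated in degrees −1 and 0, regarded as an object of K^b(proj A), and let β : A → T₂ be the chain map from the stalk complex A in degree 0 whose degree-0 component is the identity. Then: (i) for every i ∈ ℤ, every morphism A → T₂⟦i⟧ in K^b(proj A) factors through β; and (ii) the mapping cone of β is isomorphic in K^b(proj A) to A⟦1⟧ (the stalk complex A placed in degree −1). -/

import Mathlib

set_option linter.unusedSectionVars false

open CategoryTheory Category Limits ZeroObject

namespace ForPaper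

variable {V : Type*} [Category V] [Preadditive V] [HasZeroObject V]

/-- The graded object with `P` in degree `-1`, `Q` in degree `0` and `0` elsewhere. -/
noncomputable def deg (P Q : V) (n : ℤ) : V :=
  if n = -1 then P else if n = 0 then Q else 0

lemma deg_neg_one (P Q : V) : deg P Q (-1) = P := if_pos rfl

lemma deg_zero (P Q : V) : deg P Q 0 = Q := by simp [deg]

lemma deg_eq_zero (P Q : V) (n : ℤ) (h₁ : n ≠ -1) (h₂ : n ≠ 0) : deg P Q n = 0 := by
  simp [deg, h₁, h₂]

/-- The two-term cochain complex `P ⟶ Q` concentrated in (cohomological) degrees `-1`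
and `0`. -/
noncomputable def twoTerm {P Q : V} (f : P ⟶ Q) : CochainComplex V ℤ where
  X := deg P Q
  d i j :=
    if h : i = -1 ∧ j = 0 then
      eqToHom (by rw [h.1, deg_neg_one]) ≫ f ≫ eqToHom (by rw [h.2, deg_zero])
    else 0
  shape i j hij := by
    rw [dif_neg]
    rintro ⟨rfl, rfl⟩
    exact hij (by simp)
  d_comp_d' i j l _ _ := by
    by_cases h : i = -1 ∧ j = 0
    · have h' : ¬(j = -1 ∧ l = 0) := by
        rintro ⟨rfl, -⟩
        exact absurd h.2 (by decide)
      rw [dif_neg h', comp_zero]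
    · rw [dif_neg h, zero_comp]

lemma twoTerm_X_neg_one {P Q : V} (f : P ⟶ Q) : (twoTerm f).X (-1) = P := deg_neg_one P Q

lemma twoTerm_X_zero {P Q : V} (f : P ⟶ Q) : (twoTerm f).X 0 = Q := deg_zero P Q

lemma twoTerm_d {P Q : V} (f : P ⟶ Q) :
    (twoTerm f).d (-1) 0 =
      eqToHom (twoTerm_X_neg_one f) ≫ f ≫ eqToHom (twoTerm_X_zero f).symm := by
  simp [twoTerm]

/-- The stalk complex with `Q` in degree `0`, realized as a two-term complex. -/
noncomputable def stalk0 (Q : V) : CochainComplex V ℤ := twoTerm (0 : 0 ⟶ Q)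

/-- The stalk complex with `P` in degree `-1` (i.e. `P⟦1⟧`), realized as a two-term
complex. -/
noncomputable def stalkNeg1 (P : V) : CochainComplex V ℤ := twoTerm (0 : P ⟶ 0)

lemma stalk0_X_zero (Q : V) : (stalk0 Q).X 0 = Q := deg_zero (0 : V) Q

lemma stalkNeg1_X_neg_one (P : V) : (stalkNeg1 P).X (-1) = P := deg_neg_one P (0 : V)

end ForPaper

open ForPaper

set_option synthInstance.maxHeartbeats 1000000
set_option maxHeartbeats 1000000

universe u

/-- The quotient functor from complexes to `K(Mod A)`. -/
noncomputable abbrev Kq (A : Type u) [Ring A] :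
    CochainComplex (ModuleCat.{u} A) ℤ ⥤
      HomotopyCategory (ModuleCat.{u} A) (ComplexShape.up ℤ) :=
  HomotopyCategory.quotient _ _

/-- Multiplication by `a` on `A`, as an endomorphism of `A` in `ModuleCat A`. -/
noncomputable def mulMap (A : Type u) [CommRing A] (a : A) :
    ModuleCat.of A A ⟶ ModuleCat.of A A :=
  ModuleCat.ofHom (LinearMap.toSpanSingleton A A a)

/-- The truncated polynomial algebra `k[x]/(xⁿ)`. -/
abbrev TruncPoly (k : Type u) [Field k] (n : ℕ) : Type u :=
  Polynomial k ⧸ Ideal.span {(Polynomial.X : Polynomial k) ^ n}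

/-- The class of `x` in `k[x]/(xⁿ)`. -/
noncomputable abbrev truncX (k : Type u) [Field k] (n : ℕ) : TruncPoly k n :=
  Ideal.Quotient.mk _ (Polynomial.X : Polynomial k)

namespace ForPaper

variable {V : Type*} [Category V] [Preadditive V] [HasZeroObject V]

-- ### new auxiliary lemmas

lemma twoTerm_d_eq_zero {P Q : V} (f : P ⟶ Q) (p q : ℤ) (h : ¬ (p = -1 ∧ q = 0)) :
    (twoTerm f).d p q = 0 := dif_neg h

lemma isZero_twoTerm_X {P Q : V} (f : P ⟶ Q) (p : ℤ) (h₁ : p ≠ -1) (h₂ : p ≠ 0) :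
    IsZero ((twoTerm f).X p) :=
  (isZero_zero V).of_iso (eqToIso (deg_eq_zero P Q p h₁ h₂))

lemma isZero_stalk0_X (Q : V) (p : ℤ) (hp : p ≠ 0) : IsZero ((stalk0 Q).X p) := by
  by_cases h : p = -1
  · subst h
    exact (isZero_zero V).of_iso (eqToIso (deg_neg_one (0 : V) Q))
  · exact isZero_twoTerm_X _ p h hp

lemma isZero_stalkNeg1_X (P : V) (p : ℤ) (hp : p ≠ -1) : IsZero ((stalkNeg1 P).X p) := by
  by_cases h : p = 0
  · subst h
    exact (isZero_zero V).of_iso (eqToIso (deg_zero P (0 : V)))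
  · exact isZero_twoTerm_X _ p hp h

lemma stalk0_d (Q : V) (p q : ℤ) : (stalk0 Q).d p q = 0 := by
  by_cases h : p = -1 ∧ q = 0
  · obtain ⟨rfl, rfl⟩ := h
    show (twoTerm (0 : (0 : V) ⟶ Q)).d (-1) 0 = 0
    rw [twoTerm_d]
    simp
  · exact twoTerm_d_eq_zero _ p q h

lemma stalkNeg1_d (P : V) (p q : ℤ) : (stalkNeg1 P).d p q = 0 := by
  by_cases h : p = -1 ∧ q = 0
  · obtain ⟨rfl, rfl⟩ := h
    show (twoTerm (0 : P ⟶ (0 : V))).d (-1) 0 = 0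
    rw [twoTerm_d]
    simp
  · exact twoTerm_d_eq_zero _ p q h

/-- The projection from the two-term complex onto its degree `-1` part. -/
noncomputable def proj {P Q : V} (x : P ⟶ Q) : twoTerm x ⟶ stalkNeg1 P where
  f p := if hp : p = -1 then
      eqToHom (by rw [hp]; exact (twoTerm_X_neg_one x).trans (stalkNeg1_X_neg_one P).symm)
    else 0
  comm' i j hij := by
    rw [stalkNeg1_d, comp_zero]
    by_cases hj : j = -1
    · rw [twoTerm_d_eq_zero x i j (by rintro ⟨-, rfl⟩; exact absurd hj (by decide)), zero_comp]
    · rw [dif_neg hj, comp_zero]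

lemma proj_f_neg_one {P Q : V} (x : P ⟶ Q) :
    (proj x).f (-1) =
      eqToHom ((twoTerm_X_neg_one x).trans (stalkNeg1_X_neg_one P).symm) := by
  simp [proj]

lemma proj_f_eq_zero {P Q : V} (x : P ⟶ Q) (p : ℤ) (hp : p ≠ -1) :
    (proj x).f p = 0 := dif_neg hp

end ForPaper

namespace ForPaper

variable {V : Type*} [Category V] [Preadditive V] [HasZeroObject V]

lemma beta_comp_proj {P Q : V} (x : P ⟶ Q) (β : stalk0 Q ⟶ twoTerm x)
    (hβ : β.f 0 = eqToHom ((stalk0_X_zero Q).trans (twoTerm_X_zero x).symm)) :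
    β ≫ proj x = 0 := by
  ext p
  by_cases hp : p = 0
  · subst hp
    simp [proj_f_eq_zero x 0 (by decide)]
  · exact (isZero_stalk0_X Q p hp).eq_of_src _ _

/-- The degreewise split short exact sequence `stalk0 Q ⟶ twoTerm x ⟶ stalkNeg1 P`. -/
noncomputable def theSC {P Q : V} (x : P ⟶ Q) (β : stalk0 Q ⟶ twoTerm x)
    (hβ : β.f 0 = eqToHom ((stalk0_X_zero Q).trans (twoTerm_X_zero x).symm)) :
    ShortComplex (CochainComplex V ℤ) :=
  ShortComplex.mk β (proj x) (beta_comp_proj x β hβ)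

noncomputable def theSplitting {P Q : V} (x : P ⟶ Q) (β : stalk0 Q ⟶ twoTerm x)
    (hβ : β.f 0 = eqToHom ((stalk0_X_zero Q).trans (twoTerm_X_zero x).symm)) (p : ℤ) :
    (((theSC x β hβ)).map (HomologicalComplex.eval V (ComplexShape.up ℤ) p)).Splitting := by
  by_cases hp : p = 0
  · subst hp
    exact
      { r := eqToHom ((twoTerm_X_zero x).trans (stalk0_X_zero Q).symm)
        s := 0
        f_r := by
          simp [theSC, hβ]
          exact (eqToHom_trans _ _).trans (eqToHom_refl _ _)
        s_g := (isZero_stalkNeg1_X P 0 (by decide)).eq_of_src _ _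
        id := by
          simp [theSC, hβ, proj_f_eq_zero x 0 (by decide)]
          exact (congrArg₂ (· + ·) (eqToHom_trans _ _) comp_zero).trans
            ((add_zero _).trans (eqToHom_refl _ _)) }
  · by_cases hp' : p = -1
    · subst hp'
      exact
      { r := 0
        s := eqToHom ((stalkNeg1_X_neg_one P).trans (twoTerm_X_neg_one x).symm)
        f_r := (isZero_stalk0_X Q (-1) (by decide)).eq_of_src _ _
        s_g := by
          simp [theSC, proj_f_neg_one]
          exact (eqToHom_trans _ _).trans (eqToHom_refl _ _)
        id := by
          have : β.f (-1) = 0 := (isZero_stalk0_X Q (-1) (by decide)).eq_of_src _ _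
          simp [theSC, proj_f_neg_one, this]
          exact (congrArg₂ (· + ·) comp_zero (eqToHom_trans _ _)).trans
            ((zero_add _).trans (eqToHom_refl _ _)) }
    · exact
      { r := 0
        s := 0
        f_r := (isZero_stalk0_X Q p hp).eq_of_src _ _
        s_g := (isZero_stalkNeg1_X P p hp').eq_of_src _ _
        id := (isZero_twoTerm_X x p hp' hp).eq_of_src _ _ }

end ForPaper
namespace ForPaper

variable {V : Type*} [Category V] [Preadditive V] [HasZeroObject V] [HasBinaryBiproducts V]

open Pretriangulated

lemma cone_iso {P Q : V} (x : P ⟶ Q) (β : stalk0 Q ⟶ twoTerm x)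
    (hβ : β.f 0 = eqToHom ((stalk0_X_zero Q).trans (twoTerm_X_zero x).symm)) :
    Nonempty ((HomotopyCategory.quotient V (ComplexShape.up ℤ)).obj
        (CochainComplex.mappingCone β) ≅
      (HomotopyCategory.quotient V (ComplexShape.up ℤ)).obj (stalkNeg1 P)) := by
  have h₁ := HomotopyCategory.mappingCone_triangleh_distinguished β
  have h₂ : CochainComplex.trianglehOfDegreewiseSplit (theSC x β hβ) (theSplitting x β hβ) ∈
      distTriang (HomotopyCategory V (ComplexShape.up ℤ)) := by
    rw [HomotopyCategory.distinguished_iff_iso_trianglehOfDegreewiseSplit]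
    exact ⟨_, _, ⟨Iso.refl _⟩⟩
  have e := isoTriangleOfIso₁₂ _ _ h₁ h₂ (Iso.refl _) (Iso.refl _) (by
    dsimp [theSC, CochainComplex.mappingCone.triangleh]
    exact (comp_id _).trans (id_comp _).symm)
  exact ⟨Triangle.π₃.mapIso e⟩

end ForPaper
namespace ForPaper

variable {V : Type*} [Category V] [Preadditive V] [HasZeroObject V]

lemma factor_zero {Q : V} (x : Q ⟶ Q) (hx : ∀ g : Q ⟶ Q, x ≫ g = g ≫ x)
    (β : stalk0 Q ⟶ twoTerm x)
    (hβ : β.f 0 = eqToHom ((stalk0_X_zero Q).trans (twoTerm_X_zero x).symm))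
    (f : stalk0 Q ⟶ twoTerm x) :
    ∃ v : twoTerm x ⟶ twoTerm x, β ≫ v = f := by
  set g : Q ⟶ Q :=
    eqToHom (stalk0_X_zero Q).symm ≫ f.f 0 ≫ eqToHom (twoTerm_X_zero x) with hg
  have hf0 : f.f 0 = eqToHom (stalk0_X_zero Q) ≫ g ≫ eqToHom (twoTerm_X_zero x).symm := by
    simp [hg]
  refine ⟨{ f := fun p =>
      if hp : p = 0 then
        eqToHom (show (twoTerm x).X p = Q by rw [hp]; exact twoTerm_X_zero x) ≫ g ≫
          eqToHom (show Q = (twoTerm x).X p by rw [hp]; exact (twoTerm_X_zero x).symm)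
      else if hp' : p = -1 then
        eqToHom (show (twoTerm x).X p = Q by rw [hp']; exact twoTerm_X_neg_one x) ≫ g ≫
          eqToHom (show Q = (twoTerm x).X p by rw [hp']; exact (twoTerm_X_neg_one x).symm)
      else 0, comm' := ?_ }, ?_⟩
  · intro p q hpq
    simp only [ComplexShape.up_Rel] at hpq
    by_cases hp : p = -1
    · subst hp
      obtain rfl : q = 0 := by omega
      rw [dif_neg (by decide), dif_pos rfl, dif_pos rfl, twoTerm_d]
      change (𝟙 Q ≫ g ≫ 𝟙 Q) ≫ (𝟙 Q ≫ x ≫ 𝟙 Q) = (𝟙 Q ≫ x ≫ 𝟙 Q) ≫ (𝟙 Q ≫ g ≫ 𝟙 Q)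
      simp only [id_comp, comp_id]
      exact (hx g).symm
    · by_cases hp0 : p = 0
      · subst hp0
        obtain rfl : q = 1 := by omega
        rw [twoTerm_d_eq_zero x 0 1 (by decide)]
        simp
      · rw [dif_neg hp0, dif_neg hp, zero_comp,
          twoTerm_d_eq_zero x p q (by rintro ⟨rfl, -⟩; exact hp rfl), zero_comp]
  · ext p
    by_cases hp : p = 0
    · subst hp
      simp [hβ, hf0]
    · exact (isZero_stalk0_X Q p hp).eq_of_src _ _

end ForPaper
namespace ForPaper

variable {V : Type*} [Category V] [Preadditive V] [HasZeroObject V]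

lemma factor_shift {Q : V} (x : Q ⟶ Q) (hx : ∀ g : Q ⟶ Q, x ≫ g = g ≫ x)
    (β : stalk0 Q ⟶ twoTerm x)
    (hβ : β.f 0 = eqToHom ((stalk0_X_zero Q).trans (twoTerm_X_zero x).symm))
    (i : ℤ) (hi : i ≠ 0) (f : stalk0 Q ⟶ (twoTerm x)⟦i⟧) :
    ∃ v : twoTerm x ⟶ (twoTerm x)⟦i⟧, β ≫ v = f := by
  have key : (twoTerm x).d (-1) 0 ≫ f.f 0 = 0 := by
    by_cases hi1 : i = -1
    · subst hi1
      set φ : Q ⟶ Q := f.f 0 with hφ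
      have h := f.comm 0 1
      rw [stalk0_d, zero_comp] at h
      have h2 : φ ≫ ((-1 : ℤ).negOnePow • (𝟙 Q ≫ x ≫ 𝟙 Q)) = 0 := h
      rw [Linear.comp_units_smul, id_comp, comp_id] at h2
      have h3 : φ ≫ x = 0 := by simpa using h2
      change (𝟙 Q ≫ x ≫ 𝟙 Q) ≫ φ = 0
      rw [id_comp, comp_id, hx]
      exact h3
    · have h0 : f.f 0 = 0 := by
        apply IsZero.eq_of_tgt
        exact isZero_twoTerm_X x (0 + i) (by omega) (by omega)
      rw [h0]
      exact comp_zero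
  refine ⟨{ f := fun p =>
      if hp : p = 0 then
        eqToHom (show (twoTerm x).X p = (stalk0 Q).X 0 by
          rw [hp]; exact (twoTerm_X_zero x).trans (stalk0_X_zero Q).symm) ≫ f.f 0 ≫
          eqToHom (show ((twoTerm x)⟦i⟧).X 0 = ((twoTerm x)⟦i⟧).X p by rw [hp])
      else 0, comm' := ?_ }, ?_⟩
  · intro p q hpq
    simp only [ComplexShape.up_Rel] at hpq
    by_cases hp : p = -1
    · subst hp
      obtain rfl : q = 0 := by omega
      rw [dif_neg (by decide), dif_pos rfl, zero_comp]
      simp only [eqToHom_refl, comp_id, id_comp]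
      erw [id_comp]
      exact key.symm
    · by_cases hp0 : p = 0
      · subst hp0
        obtain rfl : q = 1 := by omega
        have h := f.comm 0 1
        rw [stalk0_d, zero_comp] at h
        rw [dif_pos rfl, dif_neg (by decide),
          twoTerm_d_eq_zero x 0 1 (by decide), zero_comp]
        simp only [eqToHom_refl, comp_id, assoc, h, comp_zero]
      · rw [dif_neg hp0, zero_comp,
          twoTerm_d_eq_zero x p q (by rintro ⟨rfl, -⟩; exact hp rfl), zero_comp]
  · ext p
    by_cases hp : p = 0
    · subst hp
      simp [hβ]
      exact comp_id _
    · exact (isZero_stalk0_X Q p hp).eq_of_src _ _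

end ForPaper

/-- Multiplication maps are central endomorphisms of `A` in `ModuleCat A`. -/
lemma mulMap_central (A : Type u) [CommRing A] (a : A)
    (g : ModuleCat.of A A ⟶ ModuleCat.of A A) :
    mulMap A a ≫ g = g ≫ mulMap A a := by
  apply ModuleCat.hom_ext
  apply LinearMap.ext
  intro c
  show g.hom (LinearMap.toSpanSingleton A A a c) = LinearMap.toSpanSingleton A A a (g.hom c)
  rw [LinearMap.toSpanSingleton_apply, LinearMap.toSpanSingleton_apply, smul_eq_mul,
    smul_eq_mul, mul_comm, ← smul_eq_mul, map_smul, smul_eq_mul, mul_comm]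

/-- For `A = k[x]/(xⁿ)` and `T₂ = (A ⟶[·xᵐ] A)` in degrees `-1`, `0`: every morphism
`A ⟶ T₂⟦i⟧` in `K^b(proj A)` factors through the chain map `β : A ⟶ T₂` whose degree-`0`
component is the identity, and the mapping cone of `β` is isomorphic to `A⟦1⟧`
(the stalk complex `A` placed in degree `-1`). -/
theorem statement_14 (k : Type u) [Field k] (n m : ℕ) (hn : 2 ≤ n) (hm : 1 ≤ m)
    (hmn : m < n)
    (β : stalk0 (ModuleCat.of (TruncPoly k n) (TruncPoly k n)) ⟶
      twoTerm (mulMap (TruncPoly k n) (truncX k n ^ m)))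
    (hβ : β.f 0 = eqToHom
      ((stalk0_X_zero (ModuleCat.of (TruncPoly k n) (TruncPoly k n))).trans
        (twoTerm_X_zero (mulMap (TruncPoly k n) (truncX k n ^ m))).symm)) :
    (∀ (i : ℤ) (u : (Kq (TruncPoly k n)).obj
        (stalk0 (ModuleCat.of (TruncPoly k n) (TruncPoly k n))) ⟶
        ((Kq (TruncPoly k n)).obj (twoTerm (mulMap (TruncPoly k n) (truncX k n ^ m))))⟦i⟧),
      ∃ v : (Kq (TruncPoly k n)).obj (twoTerm (mulMap (TruncPoly k n) (truncX k n ^ m))) ⟶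
        ((Kq (TruncPoly k n)).obj (twoTerm (mulMap (TruncPoly k n) (truncX k n ^ m))))⟦i⟧,
        u = (Kq (TruncPoly k n)).map β ≫ v) ∧
    Nonempty ((Kq (TruncPoly k n)).obj (CochainComplex.mappingCone β) ≅
      (Kq (TruncPoly k n)).obj
        (stalkNeg1 (ModuleCat.of (TruncPoly k n) (TruncPoly k n)))) := by
  constructor
  · intro i u
    by_cases hi : i = 0
    · subst hi
      obtain ⟨f, hf⟩ := (Kq (TruncPoly k n)).map_surjective
        (u ≫ (shiftFunctorZero (HomotopyCategory (ModuleCat.{u} (TruncPoly k n))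
          (ComplexShape.up ℤ)) ℤ).hom.app ((Kq (TruncPoly k n)).obj
            (twoTerm (mulMap (TruncPoly k n) (truncX k n ^ m)))))
      obtain ⟨v', hv'⟩ := factor_zero _ (mulMap_central (TruncPoly k n) (truncX k n ^ m)) β hβ f
      refine ⟨(Kq (TruncPoly k n)).map v' ≫
        (shiftFunctorZero (HomotopyCategory (ModuleCat.{u} (TruncPoly k n))
          (ComplexShape.up ℤ)) ℤ).inv.app ((Kq (TruncPoly k n)).obj
            (twoTerm (mulMap (TruncPoly k n) (truncX k n ^ m)))), ?_⟩
      rw [← assoc, ← Functor.map_comp, hv', hf, assoc, Iso.hom_inv_id_app]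
      exact (comp_id u).symm
    · obtain ⟨f, hf⟩ := (Kq (TruncPoly k n)).map_surjective
        (u ≫ ((Kq (TruncPoly k n)).commShiftIso i).inv.app
          (twoTerm (mulMap (TruncPoly k n) (truncX k n ^ m))))
      obtain ⟨v', hv'⟩ :=
        factor_shift _ (mulMap_central (TruncPoly k n) (truncX k n ^ m)) β hβ i hi f
      refine ⟨(Kq (TruncPoly k n)).map v' ≫
        ((Kq (TruncPoly k n)).commShiftIso i).hom.app
          (twoTerm (mulMap (TruncPoly k n) (truncX k n ^ m))), ?_⟩
      rw [← assoc, ← Functor.map_comp, hv', hf, assoc, Iso.inv_hom_id_app]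
      exact (comp_id u).symm
  · exact cone_iso _ β hβ
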